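/- arXiv:2205.00442 — 2 statements merged into one kernel-verified Lean document; each statement's English description precedes it below -/
import Mathlib

section
/- Let (G, H, (g_v), (c_v), a) be a BNPG game with altruism in which G is the complete graph on a vertex set V of size |V| = n, and let k be an integer with 0 < k < n. Define R₀(k) := {v ∈ V : Δg_v(k) + a·∑_{u∈N_v} Δg_u(k) ≤ c_v} and R₁(k) := {v ∈ V : Δg_v(k−1) + a·∑_{u∈N_v} Δg_u(k−1) ≥ c_v}. If |R₁(k)| ≥ k, |R₀(k)| ≥ n − k, and |R₀(k) \ R₁(k)| = |V \ R₁(k)|, then there exists a pure strategy Nash equilibrium in which exactly k players play 1. -/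
open Finset

/-- `Δg(t) = g(t+1) - g(t)`. -/
def dg (g : ℕ → ℝ) (t : ℕ) : ℝ := g (t + 1) - g t

/-- Number of `G`-neighbors of `v` playing 1 in the profile `x`. -/
def nv {W : Type*} [Fintype W] [DecidableEq W] (G : SimpleGraph W) [DecidableRel G.Adj]
    (x : W → Bool) (v : W) : ℕ :=
  ((G.neighborFinset v).filter (fun u => x u = true)).card

/-- Utility of player `v` in a BNPG game with altruism: input graph `G`,
altruistic (out-)neighborhoods `N`, externality functions `g`, costs `c`,
altruism parameter `a`. -/
def util {W : Type*} [Fintype W] [DecidableEq W] (G : SimpleGraph W) [DecidableRel G.Adj]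
    (N : W → Finset W) (g : W → ℕ → ℝ) (c : W → ℝ) (a : ℝ)
    (x : W → Bool) (v : W) : ℝ :=
  g v ((x v).toNat + nv G x v)
    + a * ∑ u ∈ N v, g u ((x u).toNat + nv G x u)
    - c v * (x v).toNat

/-- Pure strategy Nash equilibrium of a BNPG game with altruism. -/
def isPSNE {W : Type*} [Fintype W] [DecidableEq W] (G : SimpleGraph W) [DecidableRel G.Adj]
    (N : W → Finset W) (g : W → ℕ → ℝ) (c : W → ℝ) (a : ℝ) (x : W → Bool) : Prop :=
  ∀ v : W, ∀ b : Bool,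
    util G N g c a x v ≥ util G N g c a (Function.update x v b) v

section Helpers
open Finset
variable {W : Type*} [Fintype W] [DecidableEq W]

lemma count_eq (x : W → Bool) (v : W) :
    (x v).toNat + nv (⊤ : SimpleGraph W) x v
      = (Finset.univ.filter (fun u => x u = true)).card := by
  classical
  have h : (((⊤ : SimpleGraph W).neighborFinset v).filter (fun u => x u = true))
      = (Finset.univ.filter (fun u => x u = true)).erase v := by
    ext u
    simp only [Finset.mem_filter, Finset.mem_erase, SimpleGraph.mem_neighborFinset,
      SimpleGraph.top_adj, Finset.mem_univ, true_and]
    tauto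
  unfold nv
  rw [h]
  by_cases hv : x v = true
  · have hmem : v ∈ Finset.univ.filter (fun u => x u = true) := by simp [hv]
    rw [Finset.card_erase_of_mem hmem, hv]
    have : 1 ≤ (Finset.univ.filter (fun u => x u = true)).card :=
      Finset.card_pos.mpr ⟨v, hmem⟩
    simp only [Bool.toNat_true]
    omega
  · rw [Finset.erase_eq_of_notMem (by simp [hv])]
    have : x v = false := by simpa using hv
    simp [this]

lemma util_eq (N : W → Finset W) (g : W → ℕ → ℝ) (c : W → ℝ) (a : ℝ)
    (x : W → Bool) (v : W) :
    util (⊤ : SimpleGraph W) N g c a x v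
      = g v ((Finset.univ.filter (fun u => x u = true)).card)
        + a * ∑ u ∈ N v, g u ((Finset.univ.filter (fun u => x u = true)).card)
        - c v * (x v).toNat := by
  unfold util
  rw [count_eq]
  rw [Finset.sum_congr rfl (fun u (_ : u ∈ N v) =>
    congrArg (g u) (count_eq x u))]

end Helpers

open scoped Classical

/-- on the complete graph, if `|R₁(k)| ≥ k`, `|R₀(k)| ≥ n − k` and
`|R₀(k) \ R₁(k)| = |V \ R₁(k)|` for some `0 < k < n = |V|`, then the BNPG game
with altruism has a PSNE in which exactly `k` players play 1. -/
theorem statement2 {W : Type*} [Fintype W] [DecidableEq W]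
    (N : W → Finset W) (hN : ∀ v : W, ∀ u ∈ N v, (⊤ : SimpleGraph W).Adj v u)
    (g : W → ℕ → ℝ) (hmono : ∀ v, Monotone (g v)) (hnn : ∀ v t, 0 ≤ g v t)
    (c : W → ℝ) (hc : ∀ v, 0 ≤ c v) (a : ℝ) (ha : 0 ≤ a)
    (n k : ℕ) (hn : Fintype.card W = n) (hk0 : 0 < k) (hkn : k < n)
    (hR1 : k ≤ (Finset.univ.filter (fun v : W =>
            c v ≤ dg (g v) (k - 1) + a * ∑ u ∈ N v, dg (g u) (k - 1))).card)
    (hR0 : n - k ≤ (Finset.univ.filter (fun v : W =>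
            dg (g v) k + a * ∑ u ∈ N v, dg (g u) k ≤ c v)).card)
    (hR01 : ((Finset.univ.filter (fun v : W =>
            dg (g v) k + a * ∑ u ∈ N v, dg (g u) k ≤ c v)) \
        (Finset.univ.filter (fun v : W =>
            c v ≤ dg (g v) (k - 1) + a * ∑ u ∈ N v, dg (g u) (k - 1)))).card =
      (Finset.univ \ (Finset.univ.filter (fun v : W =>
            c v ≤ dg (g v) (k - 1) + a * ∑ u ∈ N v, dg (g u) (k - 1)))).card) :
    ∃ x : W → Bool,
      (Finset.univ.filter (fun v : W => x v = true)).card = k ∧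
      isPSNE ⊤ N g c a x := by
  classical
  set R1 := (Finset.univ.filter (fun v : W =>
      c v ≤ dg (g v) (k - 1) + a * ∑ u ∈ N v, dg (g u) (k - 1))) with hR1def
  set R0 := (Finset.univ.filter (fun v : W =>
      dg (g v) k + a * ∑ u ∈ N v, dg (g u) k ≤ c v)) with hR0def
  -- univ \ R1 ⊆ R0
  have hcompl : Finset.univ \ R1 ⊆ R0 := by
    have h1 : R0 \ R1 ⊆ Finset.univ \ R1 :=
      Finset.sdiff_subset_sdiff (Finset.subset_univ _) Finset.Subset.rfl
    have h2 : Finset.univ \ R1 = R0 \ R1 :=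
      (Finset.eq_of_subset_of_card_le h1 (le_of_eq hR01.symm)).symm
    rw [h2]
    exact Finset.sdiff_subset
  have hR1R0card : (R1 \ R0).card ≤ k := by
    have h1 : R1 \ R0 ⊆ Finset.univ \ R0 :=
      Finset.sdiff_subset_sdiff (Finset.subset_univ _) Finset.Subset.rfl
    have h2 := Finset.card_le_card h1
    rw [Finset.card_sdiff_of_subset (Finset.subset_univ _), Finset.card_univ, hn] at h2
    have h3 : R0.card ≤ n := hn ▸ Finset.card_le_univ R0
    omega
  obtain ⟨S, hSsub1, hSsub2, hScard⟩ :=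
    Finset.exists_subsuperset_card_eq (Finset.sdiff_subset : R1 \ R0 ⊆ R1) hR1R0card hR1
  refine ⟨fun v => decide (v ∈ S), ?_, ?_⟩
  · have : Finset.univ.filter (fun v : W => decide (v ∈ S) = true) = S := by
      ext u; simp
    rw [this, hScard]
  set x : W → Bool := fun v => decide (v ∈ S) with hxdef
  have hxS : Finset.univ.filter (fun u : W => x u = true) = S := by
    ext u; simp [hxdef]
  have hk1 : k - 1 + 1 = k := Nat.succ_pred_eq_of_pos hk0
  intro v b
  by_cases hvS : v ∈ S
  · have hxv : x v = true := by simp [hxdef, hvS]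
    cases b
    · -- deviation to false
      have hupd : Finset.univ.filter
          (fun u : W => Function.update x v false u = true) = S.erase v := by
        ext u
        by_cases h : u = v <;> simp [Function.update_apply, h, hxdef]
      have hv1 : v ∈ R1 := hSsub2 hvS
      rw [hR1def, Finset.mem_filter] at hv1
      have hv1' := hv1.2
      have hsum : ∑ u ∈ N v, dg (g u) (k-1)
          = ∑ u ∈ N v, g u k - ∑ u ∈ N v, g u (k-1) := by
        rw [← Finset.sum_sub_distrib]
        refine Finset.sum_congr rfl fun u _ => ?_
        unfold dg; rw [hk1]
      rw [hsum] at hv1'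
      unfold dg at hv1'
      rw [hk1, mul_sub] at hv1'
      rw [ge_iff_le, util_eq, util_eq, hupd, hxS, hScard,
        Finset.card_erase_of_mem hvS, hScard, hxv]
      simp only [Function.update_self, Bool.toNat_true, Bool.toNat_false]
      push_cast
      linarith
    · rw [← hxv, Function.update_eq_self]
  · have hxv : x v = false := by simp [hxdef, hvS]
    cases b
    · rw [← hxv, Function.update_eq_self]
    · -- deviation to true
      have hupd : Finset.univ.filter
          (fun u : W => Function.update x v true u = true) = insert v S := by
        ext u
        by_cases h : u = v <;> simp [Function.update_apply, h, hxdef]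
      have hv0 : v ∈ R0 := by
        by_cases hvR1 : v ∈ R1
        · by_contra hvR0
          exact hvS (hSsub1 (Finset.mem_sdiff.mpr ⟨hvR1, hvR0⟩))
        · exact hcompl (Finset.mem_sdiff.mpr ⟨Finset.mem_univ v, hvR1⟩)
      rw [hR0def, Finset.mem_filter] at hv0
      have hv0' := hv0.2
      have hsum : ∑ u ∈ N v, dg (g u) k
          = ∑ u ∈ N v, g u (k+1) - ∑ u ∈ N v, g u k := by
        rw [← Finset.sum_sub_distrib]
        exact Finset.sum_congr rfl fun u _ => rfl
      rw [hsum] at hv0'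
      unfold dg at hv0'
      rw [mul_sub] at hv0'
      rw [ge_iff_le, util_eq, util_eq, hupd, hxS, hScard,
        Finset.card_insert_of_notMem hvS, hScard, hxv]
      simp only [Function.update_self, Bool.toNat_true, Bool.toNat_false]
      push_cast
      linarith
end

section
/- Let (G=(V,E), p) be a directed public goods game and ε > 0, and consider the constructed BNPG game with symmetric altruism on V' = {u_in, u_out : u∈V} with input edges {{u_in,u_out} : u∈V} ∪ {{u_out,v_in} : (u,v)∈E}, altruistic edges {{u_in,u_out} : u∈V}, a = 1, c_{u_in} = 1+2ε, c_{u_out} = p, g_{u_in}(x) = 1 if x > 0 and 0 if x = 0, and g_{u_out} ≡ 0. If (Δ_w)_{w∈V'} is an ε-Nash equilibrium of this BNPG game, then (Δ_u)_{u∈V} with Δ_u := Δ_{u_out} is an ε-Nash equilibrium of the directed public goods game (G, p). -/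
open Finset

/-- `Y(0) = 0` and `Y(t) = 1` for `t > 0`. -/
def Y (t : ℕ) : ℝ := if t = 0 then 0 else 1

/-- Probability of the pure profile `x` under the product distribution in which
player `v` deterministically plays `b` and every other player `u` plays 1 with
probability `q u` (and 0 with probability `1 - q u`). -/
def weight {W : Type*} [Fintype W] [DecidableEq W]
    (q : W → ℝ) (v : W) (b : Bool) (x : W → Bool) : ℝ :=
  ∏ u : W, if u = v then (if x u = b then 1 else 0)
    else (if x u then q u else 1 - q u)

/-- Expected utility of player `v` playing `b` in a BNPG game with altruism when the
other players mix independently (`q u` = probability that `u` plays 1). -/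
def expUtil {W : Type*} [Fintype W] [DecidableEq W]
    (G : SimpleGraph W) [DecidableRel G.Adj]
    (N : W → Finset W) (g : W → ℕ → ℝ) (c : W → ℝ) (a : ℝ)
    (q : W → ℝ) (v : W) (b : Bool) : ℝ :=
  ∑ x : W → Bool, weight q v b x * util G N g c a x v

/-- `q` (with `q v` = probability that `v` plays 1) is an `ε`-Nash equilibrium of a
BNPG game with altruism: every strategy in the support of a player's mixed strategy
is an `ε`-best response. -/
def isEpsNE {W : Type*} [Fintype W] [DecidableEq W]
    (G : SimpleGraph W) [DecidableRel G.Adj]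
    (N : W → Finset W) (g : W → ℕ → ℝ) (c : W → ℝ) (a : ℝ)
    (q : W → ℝ) (ε : ℝ) : Prop :=
  (∀ v : W, 0 ≤ q v ∧ q v ≤ 1) ∧
  ∀ v : W,
    (0 < q v → ∀ b : Bool,
      expUtil G N g c a q v true ≥ expUtil G N g c a q v b - ε) ∧
    (q v < 1 → ∀ b : Bool,
      expUtil G N g c a q v false ≥ expUtil G N g c a q v b - ε)

section Construction

variable {V : Type*} [Fintype V] [DecidableEq V]

/-- Adjacency (as a Boolean function) of the input network of the constructed BNPG
game: `Sum.inl u` is `u_in`, `Sum.inr u` is `u_out`; `w_in` is adjacent to `u_out`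
iff `w = u` or `(u,w)` is an edge of the directed public goods game. -/
def adjPG (A : V → V → Prop) [DecidableRel A] : V ⊕ V → V ⊕ V → Bool
  | Sum.inl win, Sum.inr uout => decide (win = uout) || decide (A uout win)
  | Sum.inr uout, Sum.inl win => decide (win = uout) || decide (A uout win)
  | _, _ => false

/-- Input network of the constructed BNPG game. -/
def GPG (A : V → V → Prop) [DecidableRel A] : SimpleGraph (V ⊕ V) where
  Adj a b := adjPG A a b = true
  symm := ⟨by rintro (u | u) (w | w) h <;> simp_all [adjPG]⟩
  loopless := ⟨by rintro (u | u) h <;> simp [adjPG] at h⟩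

instance (A : V → V → Prop) [DecidableRel A] : DecidableRel (GPG A).Adj :=
  fun a b => inferInstanceAs (Decidable (adjPG A a b = true))

/-- Altruistic network: `u_in` and `u_out` are altruistically linked. -/
def NPG : V ⊕ V → Finset (V ⊕ V)
  | Sum.inl u => {Sum.inr u}
  | Sum.inr u => {Sum.inl u}

/-- Externality functions: `g_{u_in}(x) = 1` iff `x > 0`, and `g_{u_out} ≡ 0`. -/
def gPG : V ⊕ V → ℕ → ℝ
  | Sum.inl _ => fun t => if t = 0 then 0 else 1
  | Sum.inr _ => fun _ => 0

/-- Costs: `c_{u_in} = 1 + 2ε` and `c_{u_out} = p`. -/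
def cPG (p ε : ℝ) : V ⊕ V → ℝ
  | Sum.inl _ => 1 + 2 * ε
  | Sum.inr _ => p

end Construction

/-- Utility of player `v` in a directed public goods game given by the directed
adjacency relation `A` (edge `(u,v)` iff `A u v`) and price `p`. -/
def utilD {V : Type*} [Fintype V] [DecidableEq V]
    (A : V → V → Prop) [DecidableRel A] (p : ℝ) (x : V → Bool) (v : V) : ℝ :=
  Y ((x v).toNat + (Finset.univ.filter (fun u : V => A u v ∧ x u = true)).card)
    - p * (x v).toNat

/-- Expected utility in the directed public goods game. -/
def expUtilD {V : Type*} [Fintype V] [DecidableEq V]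
    (A : V → V → Prop) [DecidableRel A] (p : ℝ) (q : V → ℝ) (v : V) (b : Bool) : ℝ :=
  ∑ x : V → Bool, weight q v b x * utilD A p x v

/-- `ε`-Nash equilibrium of the directed public goods game. -/
def isEpsNED {V : Type*} [Fintype V] [DecidableEq V]
    (A : V → V → Prop) [DecidableRel A] (p : ℝ) (q : V → ℝ) (ε : ℝ) : Prop :=
  (∀ v : V, 0 ≤ q v ∧ q v ≤ 1) ∧
  ∀ v : V,
    (0 < q v → ∀ b : Bool, expUtilD A p q v true ≥ expUtilD A p q v b - ε) ∧
    (q v < 1 → ∀ b : Bool, expUtilD A p q v false ≥ expUtilD A p q v b - ε)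

section Aux

variable {W : Type*} [Fintype W] [DecidableEq W]

lemma weight_apply_ne (q : W → ℝ) (v : W) (b : Bool) (x : W → Bool) (h : ¬ x v = b) :
    weight q v b x = 0 := by
  apply Finset.prod_eq_zero (Finset.mem_univ v)
  simp [h]

lemma weight_nonneg (q : W → ℝ) (hq : ∀ u, 0 ≤ q u ∧ q u ≤ 1) (v : W) (b : Bool)
    (x : W → Bool) : 0 ≤ weight q v b x := by
  apply Finset.prod_nonneg
  intro u _
  split
  · split <;> norm_num
  · split
    · exact (hq u).1
    · linarith [(hq u).2]

lemma sum_prod_bool (f : W → Bool → ℝ) :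
    ∑ x : W → Bool, ∏ u, f u (x u) = ∏ u, (f u false + f u true) := by
  have : ∀ u : W, f u false + f u true = ∑ b : Bool, f u b := by
    intro u; rw [Fintype.sum_bool]; ring
  simp only [this]
  rw [Finset.prod_univ_sum]
  rw [← Fintype.piFinset_univ]

lemma sum_weight (q : W → ℝ) (v : W) (b : Bool) :
    ∑ x : W → Bool, weight q v b x = 1 := by
  have h := sum_prod_bool (fun (u : W) (c : Bool) =>
    if u = v then (if c = b then (1:ℝ) else 0) else (if c then q u else 1 - q u))
  rw [show (∑ x : W → Bool, weight q v b x) = ∏ u : W,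
      ((if u = v then (if (false : Bool) = b then (1:ℝ) else 0)
          else (if (false : Bool) then q u else 1 - q u))
        + (if u = v then (if (true : Bool) = b then (1:ℝ) else 0)
          else (if (true : Bool) then q u else 1 - q u))) from h]
  apply Finset.prod_eq_one
  intro u _
  by_cases h : u = v
  · simp only [if_pos h]; cases b <;> simp
  · simp only [if_neg h]; norm_num

lemma expUtil_eq (G : SimpleGraph W) [DecidableRel G.Adj]
    (N : W → Finset W) (g : W → ℕ → ℝ) (c : W → ℝ) (a : ℝ)
    (q : W → ℝ) (v : W) (b : Bool) :
    expUtil G N g c a q v b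
      = ∑ x : W → Bool, weight q v true x * util G N g c a (Function.update x v b) v := by
  rw [expUtil]
  have h1 : ∀ x : W → Bool, weight q v b x * util G N g c a x v
      = weight q v b x * util G N g c a (Function.update x v b) v := by
    intro x
    by_cases h : x v = b
    · rw [← h, Function.update_eq_self]
    · rw [weight_apply_ne q v b x h, zero_mul, zero_mul]
  rw [Finset.sum_congr rfl fun x _ => h1 x]
  cases b
  · have σinv : Function.Involutive (fun x : W → Bool => Function.update x v (!x v)) := by
      intro x
      funext w
      by_cases h : w = v
      · subst h; simp
      · simp [Function.update_of_ne h]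
    refine Fintype.sum_bijective _ σinv.bijective _ _ (fun x => ?_)
    have h2 : Function.update (Function.update x v (!x v)) v false
        = Function.update x v false := by
      simp [Function.update_idem]
    rw [h2]
    congr 1
    unfold weight
    apply Finset.prod_congr rfl
    intro w _
    by_cases h : w = v
    · subst h
      simp only [if_pos rfl, Function.update_self]
      cases hx : x w <;> simp
    · simp [if_neg h, Function.update_of_ne h]
  · rfl

lemma nv_update_self (G : SimpleGraph W) [DecidableRel G.Adj] (x : W → Bool) (v : W)
    (b : Bool) : nv G (Function.update x v b) v = nv G x v := by
  unfold nv
  congr 1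
  apply Finset.filter_congr
  intro u hu
  rw [SimpleGraph.mem_neighborFinset] at hu
  rw [Function.update_of_ne (G.ne_of_adj hu).symm]

end Aux

section Main

variable {V : Type*} [Fintype V] [DecidableEq V]

lemma q_inl_eq_zero (A : V → V → Prop) [DecidableRel A] (p ε : ℝ) (hε : 0 < ε)
    (q : V ⊕ V → ℝ) (hq : isEpsNE (GPG A) NPG gPG (cPG p ε) 1 q ε) (u : V) :
    q (Sum.inl u) = 0 := by
  by_contra h
  have hpos : 0 < q (Sum.inl u) := lt_of_le_of_ne (hq.1 (Sum.inl u)).1 (Ne.symm h)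
  have hNE := (hq.2 (Sum.inl u)).1 hpos false
  set v : V ⊕ V := Sum.inl u with hv
  have hdiff : ∀ x : V ⊕ V → Bool,
      util (GPG A) NPG gPG (cPG p ε) 1 (Function.update x v true) v
        - util (GPG A) NPG gPG (cPG p ε) 1 (Function.update x v false) v ≤ -(2 * ε) := by
    intro x
    have hn : ∀ b : Bool, nv (GPG A) (Function.update x v b) v = nv (GPG A) x v :=
      fun b => nv_update_self _ x v b
    have hN : ∀ b : Bool, ∑ w ∈ NPG v, gPG w
        (((Function.update x v b) w).toNat + nv (GPG A) (Function.update x v b) w) = 0 := by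
      intro b
      show ∑ w ∈ ({Sum.inr u} : Finset (V ⊕ V)), _ = 0
      rw [Finset.sum_singleton]
      rfl
    unfold util
    rw [hn true, hn false, hN true, hN false]
    simp only [Function.update_self, mul_zero, add_zero, Bool.toNat_true, Bool.toNat_false,
      mul_one, mul_zero, one_mul, Nat.cast_one, Nat.cast_zero]
    have h1 : gPG v (1 + nv (GPG A) x v) = 1 := by
      show (if 1 + nv (GPG A) x v = 0 then (0:ℝ) else 1) = 1
      simp
    have h2 : (0:ℝ) ≤ gPG v (0 + nv (GPG A) x v) := by
      show (0:ℝ) ≤ if 0 + nv (GPG A) x v = 0 then (0:ℝ) else 1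
      split <;> norm_num
    have h3 : cPG p ε v = 1 + 2 * ε := rfl
    linarith [h1, h2, h3]
  have hEU : expUtil (GPG A) NPG gPG (cPG p ε) 1 q v true
      - expUtil (GPG A) NPG gPG (cPG p ε) 1 q v false ≤ -(2 * ε) := by
    rw [expUtil_eq, expUtil_eq, ← Finset.sum_sub_distrib]
    simp only [← mul_sub]
    calc ∑ x : V ⊕ V → Bool, weight q v true x *
          (util (GPG A) NPG gPG (cPG p ε) 1 (Function.update x v true) v
            - util (GPG A) NPG gPG (cPG p ε) 1 (Function.update x v false) v)
        ≤ ∑ x : V ⊕ V → Bool, weight q v true x * (-(2 * ε)) := by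
          apply Finset.sum_le_sum
          intro x _
          exact mul_le_mul_of_nonneg_left (hdiff x) (weight_nonneg q hq.1 v true x)
      _ = -(2 * ε) := by rw [← Finset.sum_mul, sum_weight, one_mul]
  linarith

lemma expUtil_inr (A : V → V → Prop) [DecidableRel A] (p ε : ℝ)
    (q : V ⊕ V → ℝ) (hinl : ∀ w, q (Sum.inl w) = 0) (u : V) (b : Bool) :
    expUtil (GPG A) NPG gPG (cPG p ε) 1 q (Sum.inr u) b
      = expUtilD A p (fun w => q (Sum.inr w)) u b := by
  rw [expUtil, expUtilD]
  rw [← (Equiv.sumArrowEquivProdArrow V V Bool).symm.sum_comp]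
  rw [Fintype.sum_prod_type]
  have helim : ∀ (y z : V → Bool),
      (Equiv.sumArrowEquivProdArrow V V Bool).symm (y, z) = Sum.elim y z := fun y z => rfl
  have hw : ∀ (y z : V → Bool), weight q (Sum.inr u) b (Sum.elim y z)
      = (∏ w, if y w then (0:ℝ) else 1) * weight (fun w => q (Sum.inr w)) u b z := by
    intro y z
    rw [weight, weight, Fintype.prod_sum_type]
    congr 1
    · apply Finset.prod_congr rfl
      intro w _
      simp [hinl w]
    · apply Finset.prod_congr rfl
      intro w _
      simp [Sum.inr.injEq]
      congr
  have hu : ∀ (y z : V → Bool), util (GPG A) NPG gPG (cPG p ε) 1 (Sum.elim y z) (Sum.inr u)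
      = gPG (Sum.inl u : V ⊕ V) ((y u).toNat + nv (GPG A) (Sum.elim y z) (Sum.inl u))
          - p * (z u).toNat := by
    intro y z
    unfold util
    show gPG (Sum.inr u : V ⊕ V) _ + 1 * ∑ w ∈ ({Sum.inl u} : Finset (V ⊕ V)), _ - cPG p ε (Sum.inr u) * _ = _
    rw [Finset.sum_singleton]
    simp only [Sum.elim_inl, Sum.elim_inr]
    show (0:ℝ) + 1 * _ - p * _ = _
    ring
  simp only [helim, hw, hu, mul_assoc]
  have hy : ∀ (f : (V → Bool) → ℝ),
      ∑ y : V → Bool, (∏ w, if y w then (0:ℝ) else 1) * f y = f (fun _ => false) := by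
    intro f
    rw [Finset.sum_eq_single (fun _ => false)]
    · simp
    · intro y _ hy
      have : ∃ w, y w = true := by
        by_contra hcon
        push_neg at hcon
        exact hy (funext fun w => by simpa using hcon w)
      obtain ⟨w, hw'⟩ := this
      rw [Finset.prod_eq_zero (Finset.mem_univ w) (by simp [hw']), zero_mul]
    · intro h; exact absurd (Finset.mem_univ _) h
  rw [show (∑ y : V → Bool, ∑ z : V → Bool, (∏ w, if y w then (0:ℝ) else 1) *
      (weight (fun w => q (Sum.inr w)) u b z *
        (gPG (Sum.inl u : V ⊕ V) ((y u).toNat + nv (GPG A) (Sum.elim y z) (Sum.inl u))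
          - p * (z u).toNat)))
      = ∑ y : V → Bool, (∏ w, if y w then (0:ℝ) else 1) *
        ((fun y => ∑ z : V → Bool, weight (fun w => q (Sum.inr w)) u b z *
          (gPG (Sum.inl u : V ⊕ V) ((y u).toNat + nv (GPG A) (Sum.elim y z) (Sum.inl u))
            - p * (z u).toNat)) y) from by
        simp only [Finset.mul_sum], hy]
  apply Finset.sum_congr rfl
  intro z _
  congr 1
  unfold utilD
  congr 1
  have hiff : nv (GPG A) (Sum.elim (fun _ => false) z) (Sum.inl u) = 0 ↔
      (z u).toNat + (Finset.univ.filter (fun w : V => A w u ∧ z w = true)).card = 0 := by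
    rw [nv]
    simp only [Finset.card_eq_zero, Finset.filter_eq_empty_iff, SimpleGraph.mem_neighborFinset,
      Nat.add_eq_zero, Finset.mem_univ, true_implies, Bool.toNat_eq_zero]
    constructor
    · intro h
      constructor
      · have := h (x := Sum.inr u) (by
          show adjPG A (Sum.inl u) (Sum.inr u) = true
          simp [adjPG])
        simpa using this
      · intro w ⟨haw, hzw⟩
        have := h (x := Sum.inr w) (by
          show adjPG A (Sum.inl u) (Sum.inr w) = true
          simp [adjPG, haw])
        simp [hzw] at this
    · rintro ⟨hzu, hall⟩ s hs
      match s with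
      | Sum.inl w =>
        exact absurd hs (by show ¬ adjPG A _ _ = true; simp [adjPG])
      | Sum.inr w =>
        have hs' : u = w ∨ A w u := by
          have : adjPG A (Sum.inl u) (Sum.inr w) = true := hs
          simpa [adjPG] using this
        simp only [Sum.elim_inr]
        rcases hs' with h | h
        · subst h; simpa using hzu
        · by_contra hc
          exact @hall w ⟨h, by simpa using hc⟩
  show (if (0:ℕ) + nv (GPG A) (Sum.elim (fun _ => false) z) (Sum.inl u) = 0 then (0:ℝ) else 1)
      = Y ((z u).toNat + (Finset.univ.filter (fun w : V => A w u ∧ z w = true)).card)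
  rw [Y]
  simp only [Nat.zero_add]
  by_cases h : nv (GPG A) (Sum.elim (fun _ => false) z) (Sum.inl u) = 0
  · rw [if_pos h, if_pos (hiff.mp h)]
  · rw [if_neg h, if_neg (fun hc => h (hiff.mpr hc))]

end Main

/-- if `q` is an `ε`-Nash equilibrium of the BNPG game with symmetric
altruism constructed from a directed public goods game `(A, p)`, then the restriction
of `q` to the `u_out` players is an `ε`-Nash equilibrium of `(A, p)`. -/
theorem statement10 {V : Type*} [Fintype V] [DecidableEq V]
    (A : V → V → Prop) [DecidableRel A] (p ε : ℝ) (hε : 0 < ε)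
    (q : V ⊕ V → ℝ)
    (hq : isEpsNE (GPG A) NPG gPG (cPG p ε) 1 q ε) :
    isEpsNED A p (fun u => q (Sum.inr u)) ε := by
  have hinl : ∀ w, q (Sum.inl w) = 0 := q_inl_eq_zero A p ε hε q hq
  have hEU : ∀ u b, expUtil (GPG A) NPG gPG (cPG p ε) 1 q (Sum.inr u) b
      = expUtilD A p (fun w => q (Sum.inr w)) u b := expUtil_inr A p ε q hinl
  refine ⟨fun u => hq.1 (Sum.inr u), fun u => ⟨fun hpos b => ?_, fun hlt b => ?_⟩⟩
  · rw [← hEU, ← hEU]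
    exact (hq.2 (Sum.inr u)).1 hpos b
  · rw [← hEU, ← hEU]
    exact (hq.2 (Sum.inr u)).2 hlt b
end
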